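/- Let (ξ_i)_{i≥0} be the stationary Markov chain on [−1,1] with transition kernel Q(x,A) = (1 − |x|)·δ_x(A) + |x|·ν(A), ν(dx) = |x| dx, and marginal distribution π(dx) = dx/2; set X_i = sign(ξ_i), S_n = Σ_{i=1}^n X_i and σ_n² = 𝔼 S_n². Then σ_n²/(2n log n) → 1 as n → ∞. -/

import Mathlib

open MeasureTheory Filter
open scoped ENNReal Topology

/-- The proposal measure `ν(dx) = |x| dx` on `[-1,1]`. -/
noncomputable def nuMH : Measure ℝ :=
  (volume.restrict (Set.Icc (-1 : ℝ) 1)).withDensity fun x => ENNReal.ofReal |x|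

/-- The uniform distribution `π(dx) = dx/2` on `[-1,1]`. -/
noncomputable def piMH : Measure ℝ :=
  (volume.restrict (Set.Icc (-1 : ℝ) 1)).withDensity fun _ => ENNReal.ofReal (1 / 2)

/-- The Metropolis–Hastings transition measure
`Q(x, ·) = (1 - |x|) δ_x + |x| ν`. -/
noncomputable def QMH (x : ℝ) : Measure ℝ :=
  ENNReal.ofReal (1 - |x|) • Measure.dirac x + ENNReal.ofReal |x| • nuMH

/-- The σ-algebra generated by `ξ_0, …, ξ_k`. -/
def pastFilt {Ω : Type*} [MeasurableSpace Ω] (ξ : ℕ → Ω → ℝ) (k : ℕ) :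
    MeasurableSpace Ω :=
  ⨆ i ≤ k, MeasurableSpace.comap (ξ i) inferInstance

/-- Partial sums `S_n = X_1 + ⋯ + X_n` with `X_i = sign(ξ_i)`. -/
noncomputable def SpartMH {Ω : Type*} (ξ : ℕ → Ω → ℝ) (n : ℕ) (ω : Ω) : ℝ :=
  ∑ i ∈ Finset.Icc 1 n, Real.sign (ξ i ω)

namespace MH18

lemma measurable_sign : Measurable Real.sign := by
  unfold Real.sign
  exact Measurable.ite (measurableSet_lt measurable_id measurable_const) measurable_const
    (Measurable.ite (measurableSet_lt measurable_const measurable_id) measurable_const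
      measurable_const)

lemma abs_sign_le (x : ℝ) : |Real.sign x| ≤ 1 := by
  rcases Real.sign_apply_eq x with h | h | h <;> rw [h] <;> norm_num

noncomputable def hfun (m : ℕ) (x : ℝ) : ℝ := (max (1 - |x|) 0) ^ m * Real.sign x

lemma measurable_hfun (m : ℕ) : Measurable (hfun m) :=
  ((measurable_const.sub measurable_abs).max measurable_const).pow_const m |>.mul measurable_sign

lemma max_le_one (x : ℝ) : max (1 - |x|) 0 ≤ 1 := by
  have := abs_nonneg x; apply max_le <;> linarith

lemma abs_hfun_le (m : ℕ) (x : ℝ) : |hfun m x| ≤ 1 := by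
  rw [hfun, abs_mul, abs_pow, abs_of_nonneg (le_max_right _ _)]
  calc (max (1 - |x|) 0) ^ m * |Real.sign x| ≤ 1 ^ m * 1 := by
        apply mul_le_mul (pow_le_pow_left₀ (le_max_right _ _) (max_le_one x) m)
          (abs_sign_le x) (abs_nonneg _) (by norm_num)
    _ = 1 := by norm_num

lemma hfun_neg (m : ℕ) (x : ℝ) : hfun m (-x) = - hfun m x := by
  rw [hfun, hfun, abs_neg, Real.sign_neg, mul_neg]

lemma hfun_succ (m : ℕ) (x : ℝ) : max (1 - |x|) 0 * hfun m x = hfun (m + 1) x := by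
  rw [hfun, hfun, pow_succ]; ring

lemma hfun_zero (x : ℝ) : hfun 0 x = Real.sign x := by rw [hfun, pow_zero, one_mul]

lemma integrable_of_bdd {α : Type*} [MeasurableSpace α] {μ : Measure α} [IsFiniteMeasure μ]
    {f : α → ℝ} {C : ℝ} (hf : AEStronglyMeasurable f μ) (h : ∀ᵐ x ∂μ, |f x| ≤ C) :
    Integrable f μ :=
  Integrable.mono' (integrable_const C) hf (by simpa using h)

end MH18

namespace MH18b
open MH18

lemma intervalIntegrable_of_bdd {f : ℝ → ℝ} {C : ℝ} (hf : Measurable f)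
    (a b : ℝ) (h : ∀ x ∈ Set.uIoc a b, |f x| ≤ C) : IntervalIntegrable f volume a b := by
  rw [intervalIntegrable_iff]
  haveI : IsFiniteMeasure (volume.restrict (Set.uIoc a b)) := ⟨by
    rw [Measure.restrict_apply_univ]; exact measure_Ioc_lt_top⟩
  exact integrable_of_bdd hf.aestronglyMeasurable ((ae_restrict_mem measurableSet_uIoc).mono h)

lemma integral_Icc_odd {f : ℝ → ℝ} {C : ℝ} (hf : Measurable f)
    (hb : ∀ x ∈ Set.Icc (-1:ℝ) 1, |f x| ≤ C) (hodd : ∀ x, f (-x) = - f x) :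
    ∫ x in Set.Icc (-1:ℝ) 1, f x = 0 := by
  have hsub1 : Set.uIoc (-1:ℝ) 0 ⊆ Set.Icc (-1:ℝ) 1 := by
    rw [Set.uIoc_of_le (by norm_num : (-1:ℝ) ≤ 0)]
    intro x hx; exact ⟨le_of_lt hx.1, le_trans hx.2 (by norm_num)⟩
  have hsub2 : Set.uIoc (0:ℝ) 1 ⊆ Set.Icc (-1:ℝ) 1 := by
    rw [Set.uIoc_of_le (by norm_num : (0:ℝ) ≤ 1)]
    intro x hx; exact ⟨le_trans (by norm_num) (le_of_lt hx.1), hx.2⟩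
  have h1 : IntervalIntegrable f volume (-1) 0 :=
    intervalIntegrable_of_bdd hf _ _ (fun x hx => hb x (hsub1 hx))
  have h2 : IntervalIntegrable f volume 0 1 :=
    intervalIntegrable_of_bdd hf _ _ (fun x hx => hb x (hsub2 hx))
  rw [MeasureTheory.integral_Icc_eq_integral_Ioc,
    ← intervalIntegral.integral_of_le (by norm_num : (-1:ℝ) ≤ 1),
    ← intervalIntegral.integral_add_adjacent_intervals h1 h2]
  have key : ∫ x in (-1:ℝ)..0, f x = - ∫ x in (0:ℝ)..1, f x := by
    have h3 := intervalIntegral.integral_comp_neg f (a := 0) (b := 1)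
    simp only [hodd, intervalIntegral.integral_neg, neg_zero] at h3
    rw [← h3]
  rw [key]; ring

end MH18b

namespace MH18c
open MH18 MH18b

lemma ofReal_comp_eq (d : ℝ → ℝ) :
    (fun x => ENNReal.ofReal (d x)) = fun x => ((d x).toNNReal : ℝ≥0∞) := rfl

lemma withDensity_integral {g : ℝ → ℝ} {d : ℝ → ℝ} (hd : Measurable d) (hd0 : ∀ x, 0 ≤ d x) :
    ∫ x, g x ∂((volume.restrict (Set.Icc (-1:ℝ) 1)).withDensity fun x => ENNReal.ofReal (d x))
      = ∫ x in Set.Icc (-1:ℝ) 1, d x * g x := by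
  rw [ofReal_comp_eq, integral_withDensity_eq_integral_smul hd.real_toNNReal g]
  congr 1; ext x
  rw [NNReal.smul_def, Real.coe_toNNReal _ (hd0 x), smul_eq_mul]

lemma abs_le_one_of_mem {x : ℝ} (hx : x ∈ Set.Icc (-1:ℝ) 1) : |x| ≤ 1 :=
  abs_le.mpr ⟨hx.1, hx.2⟩

instance : IsFiniteMeasure nuMH := by
  constructor
  rw [nuMH, withDensity_apply _ MeasurableSet.univ, Measure.restrict_univ]
  calc ∫⁻ x, ENNReal.ofReal |x| ∂(volume.restrict (Set.Icc (-1:ℝ) 1))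
      ≤ ∫⁻ _, 1 ∂(volume.restrict (Set.Icc (-1:ℝ) 1)) := by
        apply lintegral_mono_ae
        filter_upwards [ae_restrict_mem measurableSet_Icc] with x hx
        calc ENNReal.ofReal |x| ≤ ENNReal.ofReal 1 :=
              ENNReal.ofReal_le_ofReal (abs_le_one_of_mem hx)
          _ = 1 := by simp
    _ < ⊤ := by
        rw [lintegral_one, Measure.restrict_apply_univ, Real.volume_Icc]
        exact ENNReal.ofReal_lt_top

instance : IsProbabilityMeasure piMH := by
  constructor
  rw [piMH, withDensity_apply _ MeasurableSet.univ, Measure.restrict_univ, lintegral_const,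
    Measure.restrict_apply_univ, Real.volume_Icc, ← ENNReal.ofReal_mul (by norm_num)]
  norm_num

lemma integral_nuMH_hfun (m : ℕ) : ∫ x, hfun m x ∂nuMH = 0 := by
  rw [nuMH, withDensity_integral measurable_abs abs_nonneg]
  refine integral_Icc_odd (C := 1) (measurable_abs.mul (measurable_hfun m))
    (fun x hx => ?_) (fun x => by rw [abs_neg, hfun_neg, mul_neg])
  rw [abs_mul, abs_abs]
  calc |x| * |hfun m x| ≤ 1 * 1 :=
        mul_le_mul (abs_le_one_of_mem hx) (abs_hfun_le m x) (abs_nonneg _) (by norm_num)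
    _ = 1 := by norm_num

lemma integral_piMH_sign_hfun (m : ℕ) :
    ∫ x, Real.sign x * hfun m x ∂piMH = 1 / (m + 1) := by
  rw [piMH, withDensity_integral measurable_const (fun _ => by norm_num)]
  have hae : (fun x => 1/2 * (Real.sign x * hfun m x))
      =ᵐ[volume.restrict (Set.Icc (-1:ℝ) 1)]
      (fun x => 1/2 * (max (1 - |x|) 0) ^ m) := by
    refine ae_restrict_of_ae ?_
    have h0 : (volume : Measure ℝ) {(0:ℝ)} = 0 := Real.volume_singleton
    filter_upwards [measure_eq_zero_iff_ae_notMem.mp h0] with x hx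
    have hx0 : x ≠ 0 := by simpa using hx
    have hs : Real.sign x * Real.sign x = 1 := by
      rcases Real.sign_apply_eq_of_ne_zero x hx0 with h | h <;> rw [h] <;> norm_num
    rw [hfun, show Real.sign x * ((max (1 - |x|) 0) ^ m * Real.sign x)
      = (max (1 - |x|) 0) ^ m * (Real.sign x * Real.sign x) by ring, hs, mul_one]
  rw [integral_congr_ae hae, integral_const_mul]
  have hpow : ∫ x in Set.Icc (-1:ℝ) 1, (max (1 - |x|) 0) ^ m = 2 / (m + 1) := by
    rw [MeasureTheory.integral_Icc_eq_integral_Ioc,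
      ← intervalIntegral.integral_of_le (by norm_num : (-1:ℝ) ≤ 1),
      ← intervalIntegral.integral_add_adjacent_intervals (a := (-1:ℝ)) (b := 0) (c := 1)
        (intervalIntegrable_of_bdd (C := 1) (f := fun x => (max (1 - |x|) 0) ^ m)
          (((measurable_const.sub measurable_abs).max measurable_const).pow_const m) _ _
          (fun x _ => by
            rw [abs_pow, abs_of_nonneg (le_max_right _ _)]
            exact pow_le_one₀ (le_max_right _ _) (max_le_one x)))
        (intervalIntegrable_of_bdd (C := 1) (f := fun x => (max (1 - |x|) 0) ^ m)
          (((measurable_const.sub measurable_abs).max measurable_const).pow_const m) _ _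
          (fun x _ => by
            rw [abs_pow, abs_of_nonneg (le_max_right _ _)]
            exact pow_le_one₀ (le_max_right _ _) (max_le_one x)))]
    have e1 : ∫ x in (-1:ℝ)..0, (max (1 - |x|) 0) ^ m = ∫ x in (-1:ℝ)..0, (x + 1) ^ m := by
      apply intervalIntegral.integral_congr
      intro x hx
      rw [Set.uIcc_of_le (by norm_num : (-1:ℝ) ≤ 0)] at hx
      show ((1 - |x|) ⊔ 0) ^ m = (x + 1) ^ m
      rw [abs_of_nonpos hx.2, sub_neg_eq_add, max_eq_left (by linarith [hx.1] : (0:ℝ) ≤ 1 + x)]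
      ring_nf
    have e2 : ∫ x in (0:ℝ)..1, (max (1 - |x|) 0) ^ m = ∫ x in (0:ℝ)..1, (1 - x) ^ m := by
      apply intervalIntegral.integral_congr
      intro x hx
      rw [Set.uIcc_of_le (by norm_num : (0:ℝ) ≤ 1)] at hx
      show ((1 - |x|) ⊔ 0) ^ m = (1 - x) ^ m
      rw [abs_of_nonneg hx.1, max_eq_left (by linarith [hx.2] : (0:ℝ) ≤ 1 - x)]
    rw [e1, e2,
      intervalIntegral.integral_comp_add_right (fun y => y ^ m) 1,
      intervalIntegral.integral_comp_sub_left (fun y => y ^ m) 1]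
    norm_num [integral_pow]
    rw [inv_eq_one_div, ← add_div]; norm_num
  rw [hpow]
  field_simp

end MH18c

namespace MH18d

noncomputable def Hn (n : ℕ) : ℝ := (harmonic n : ℝ)

noncomputable def cterm (i l : ℕ) : ℝ := 1 / ((max i l - min i l : ℕ) + 1)

lemma cterm_symm (i l : ℕ) : cterm i l = cterm l i := by
  rw [cterm, cterm, max_comm, min_comm]

lemma cterm_of_le {i l : ℕ} (h : i ≤ l) : cterm i l = 1 / ((l - i : ℕ) + 1) := by
  rw [cterm, max_eq_right h, min_eq_left h]

lemma Hn_succ (n : ℕ) : Hn (n + 1) = Hn n + 1 / ((n : ℝ) + 1) := by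
  rw [Hn, Hn, harmonic_succ]; push_cast; ring

lemma sum_inv_succ (n : ℕ) : ∑ j ∈ Finset.Icc 1 n, (1 : ℝ) / ((j : ℕ) + 1) = Hn (n + 1) - 1 := by
  have hIcc : ∀ f : ℕ → ℝ, ∑ j ∈ Finset.Icc 1 n, f j = ∑ i ∈ Finset.range n, f (1 + i) := by
    intro f
    rw [← Finset.Ico_add_one_right_eq_Icc, Finset.sum_Ico_eq_sum_range]
    simp
  rw [hIcc]
  have hH : Hn (n + 1) = ∑ i ∈ Finset.range (n + 1), (1 : ℝ) / ((i : ℕ) + 1) := by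
    rw [Hn, harmonic, Rat.cast_sum]
    apply Finset.sum_congr rfl
    intro i _
    push_cast
    rw [one_div]
  rw [hH, Finset.sum_range_succ']
  push_cast
  norm_num
  apply Finset.sum_congr rfl
  intro i _
  ring

lemma sum_cross (n : ℕ) : ∑ l ∈ Finset.Icc 1 n, cterm (n + 1) l = Hn (n + 1) - 1 := by
  rw [← sum_inv_succ n]
  apply Finset.sum_nbij' (i := fun l => n + 1 - l) (j := fun l => n + 1 - l)
  · intro a ha; simp only [Finset.mem_Icc] at *; omega
  · intro a ha; simp only [Finset.mem_Icc] at *; omega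
  · intro a ha; simp only [Finset.mem_Icc] at ha; omega
  · intro a ha; simp only [Finset.mem_Icc] at ha; omega
  · intro l hl
    simp only [Finset.mem_Icc] at hl
    rw [cterm_symm, cterm_of_le (by omega)]

lemma sum_cterm (n : ℕ) :
    ∑ i ∈ Finset.Icc 1 n, ∑ l ∈ Finset.Icc 1 n, cterm i l
      = 2 * ((n : ℝ) + 1) * Hn n - 3 * n := by
  induction n with
  | zero => simp [Hn]
  | succ n ih =>
    have hins : Finset.Icc 1 (n + 1) = insert (n + 1) (Finset.Icc 1 n) := by
      ext x; simp only [Finset.mem_Icc, Finset.mem_insert]; omega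
    have hnot : (n + 1) ∉ Finset.Icc 1 n := by simp
    have hrow : ∀ i, ∑ l ∈ Finset.Icc 1 (n+1), cterm i l
        = cterm i (n+1) + ∑ l ∈ Finset.Icc 1 n, cterm i l := by
      intro i; rw [hins, Finset.sum_insert hnot]
    simp_rw [hrow]
    rw [hins, Finset.sum_insert hnot, Finset.sum_add_distrib]
    have hdiag : cterm (n+1) (n+1) = 1 := by
      rw [cterm_of_le le_rfl]; simp
    have hcol : ∑ i ∈ Finset.Icc 1 n, cterm i (n+1)
        = ∑ i ∈ Finset.Icc 1 n, cterm (n+1) i := by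
      apply Finset.sum_congr rfl
      intro i _
      rw [cterm_symm]
    rw [hcol, sum_cross, ih, hdiag, Hn_succ]
    push_cast
    have hne : (n : ℝ) + 1 ≠ 0 := by positivity
    field_simp
    ring

lemma tendsto_ratio :
    Tendsto (fun n : ℕ => (2 * ((n:ℝ) + 1) * Hn n - 3 * n) / (2 * n * Real.log n))
      atTop (𝓝 1) := by
  have hlog : Tendsto (fun n : ℕ => Real.log n) atTop atTop :=
    Real.tendsto_log_atTop.comp tendsto_natCast_atTop_atTop
  have h1 : Tendsto (fun n : ℕ => Hn n / Real.log n) atTop (𝓝 1) := by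
    have hsub : Tendsto (fun n : ℕ => Hn n - Real.log n) atTop
        (𝓝 Real.eulerMascheroniConstant) := Real.tendsto_harmonic_sub_log
    have h0 := hsub.div_atTop hlog
    have := h0.add (tendsto_const_nhds : Tendsto (fun _ : ℕ => (1:ℝ)) atTop (𝓝 1))
    rw [zero_add] at this
    apply this.congr'
    filter_upwards [eventually_ge_atTop 2] with n hn
    have hlogpos : 0 < Real.log n := Real.log_pos (by exact_mod_cast hn)
    field_simp
    ring
  have h2 : Tendsto (fun n : ℕ => ((n:ℝ) + 1) / n) atTop (𝓝 1) := by
    have := (tendsto_const_nhds : Tendsto (fun _ : ℕ => (1:ℝ)) atTop (𝓝 1)).add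
      tendsto_one_div_atTop_nhds_zero_nat
    rw [add_zero] at this
    apply this.congr'
    filter_upwards [eventually_ge_atTop 1] with n hn
    have : (n:ℝ) ≠ 0 := by positivity
    field_simp
  have h3 : Tendsto (fun n : ℕ => 3 / (2 * Real.log n)) atTop (𝓝 0) :=
    tendsto_const_nhds.div_atTop (hlog.const_mul_atTop (by norm_num))
  have hcomb := (h2.mul h1).sub h3
  rw [one_mul, sub_zero] at hcomb
  apply hcomb.congr'
  filter_upwards [eventually_ge_atTop 2] with n hn
  have hn0 : (n:ℝ) ≠ 0 := by positivity
  have hlogpos : 0 < Real.log n := Real.log_pos (by exact_mod_cast hn)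
  field_simp

end MH18d

namespace MH18e
open MH18 MH18b MH18c

lemma ofReal_max (a : ℝ) : ENNReal.ofReal a = ENNReal.ofReal (max a 0) := by
  rcases le_total a 0 with h | h
  · rw [ENNReal.ofReal_eq_zero.mpr h, max_eq_right h, ENNReal.ofReal_zero]
  · rw [max_eq_left h]

lemma toReal_ofReal_max (a : ℝ) : (ENNReal.ofReal a).toReal = max a 0 := by
  rw [ofReal_max, ENNReal.toReal_ofReal (le_max_right _ _)]

lemma nuMH_ne_top (A : Set ℝ) : nuMH A ≠ ⊤ := measure_ne_top _ _

lemma QMH_apply (x : ℝ) {A : Set ℝ} (hA : MeasurableSet A) :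
    QMH x A = ENNReal.ofReal (1 - |x|) * A.indicator (fun _ => (1 : ℝ≥0∞)) x
      + ENNReal.ofReal |x| * nuMH A := by
  rw [QMH, Measure.add_apply, Measure.smul_apply, Measure.smul_apply, smul_eq_mul, smul_eq_mul,
    Measure.dirac_apply' x hA]
  rfl

lemma QMH_toReal (x : ℝ) {A : Set ℝ} (hA : MeasurableSet A) :
    (QMH x A).toReal
      = max (1 - |x|) 0 * A.indicator (fun _ => (1 : ℝ)) x + |x| * (nuMH A).toReal := by
  rw [QMH_apply x hA]
  by_cases hx : x ∈ A
  · rw [Set.indicator_of_mem hx, Set.indicator_of_mem hx, mul_one, mul_one,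
      ENNReal.toReal_add ENNReal.ofReal_ne_top
        (ENNReal.mul_ne_top ENNReal.ofReal_ne_top (nuMH_ne_top A)),
      ENNReal.toReal_mul, ENNReal.toReal_ofReal (abs_nonneg x), toReal_ofReal_max]
  · rw [Set.indicator_of_notMem hx, Set.indicator_of_notMem hx, mul_zero, mul_zero,
      zero_add, zero_add, ENNReal.toReal_mul, ENNReal.toReal_ofReal (abs_nonneg x)]

lemma indicator_ofReal_eq (A : Set ℝ) (y : ℝ) :
    ENNReal.ofReal (max (1 - |y|) 0 * A.indicator (fun _ => (1 : ℝ)) y)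
      = A.indicator (fun z => ENNReal.ofReal (1 - |z|)) y := by
  by_cases hy : y ∈ A
  · rw [Set.indicator_of_mem hy, Set.indicator_of_mem hy, mul_one, ← ofReal_max]
  · rw [Set.indicator_of_notMem hy, Set.indicator_of_notMem hy, mul_zero, ENNReal.ofReal_zero]

section Chain

variable {Ω : Type*} [MeasurableSpace Ω] (P : Measure Ω) [IsProbabilityMeasure P]
  (ξ : ℕ → Ω → ℝ)

lemma pastFilt_le (hmeas : ∀ i, Measurable (ξ i)) (k : ℕ) :
    pastFilt ξ k ≤ ‹MeasurableSpace Ω› := by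
  rw [pastFilt]
  exact iSup_le fun i => iSup_le fun _ => (hmeas i).comap_le

lemma memPast (hmeas : ∀ i, Measurable (ξ i)) {k j : ℕ} (hj : j ≤ k) {S : Set ℝ}
    (hS : MeasurableSet S) : MeasurableSet[pastFilt ξ k] (ξ j ⁻¹' S) := by
  have hle : MeasurableSpace.comap (ξ j) inferInstance ≤ pastFilt ξ k := by
    rw [pastFilt]
    exact le_iSup₂ (f := fun i (_ : i ≤ k) => MeasurableSpace.comap (ξ i) inferInstance) j hj
  exact hle _ ⟨S, hS, rfl⟩

lemma ae_abs_le (hmeas : ∀ i, Measurable (ξ i)) (hmarg : ∀ i, P.map (ξ i) = piMH) (k : ℕ) :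
    ∀ᵐ ω ∂P, |ξ k ω| ≤ 1 := by
  have hpre : P (ξ k ⁻¹' (Set.Icc (-1:ℝ) 1)ᶜ) = 0 := by
    rw [← Measure.map_apply (hmeas k) measurableSet_Icc.compl, hmarg k, piMH,
      withDensity_apply _ measurableSet_Icc.compl, setLIntegral_const,
      Measure.restrict_apply measurableSet_Icc.compl, Set.compl_inter_self, measure_empty,
      mul_zero]
  rw [ae_iff]
  apply measure_mono_null _ hpre
  intro ω hω hc
  exact hω (abs_le_one_of_mem hc)

lemma kernel_measure (hmeas : ∀ i, Measurable (ξ i)) (hmarg : ∀ i, P.map (ξ i) = piMH)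
    (hMarkov : ∀ (k : ℕ) (A : Set ℝ), MeasurableSet A →
      (P[fun ω => Set.indicator A (fun _ => (1 : ℝ)) (ξ (k + 1) ω) | pastFilt ξ k])
        =ᵐ[P] fun ω => (QMH (ξ k ω) A).toReal)
    (k : ℕ) {B : Set Ω} (hB : MeasurableSet[pastFilt ξ k] B) :
    (P.restrict B).map (ξ (k+1))
      = ((P.restrict B).map (ξ k)).withDensity (fun x => ENNReal.ofReal (1 - |x|))
        + (∫⁻ ω in B, ENNReal.ofReal |ξ k ω| ∂P) • nuMH := by
  classical
  have hle := pastFilt_le ξ hmeas k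
  have hBm : MeasurableSet B := hle B hB
  have hψ := hmeas (k+1)
  have hφ := hmeas k
  have haeB : ∀ᵐ ω ∂(P.restrict B), |ξ k ω| ≤ 1 :=
    ae_restrict_of_ae (ae_abs_le P ξ hmeas hmarg k)
  refine Measure.ext fun A hA => ?_
  have hindm : Measurable (fun y => A.indicator (fun _ => (1:ℝ)) y) :=
    measurable_const.indicator hA
  -- the real-integral identity from the Markov property
  have hreal : ∫ ω in B, A.indicator (fun _ => (1:ℝ)) (ξ (k+1) ω) ∂P
      = ∫ ω in B, (QMH (ξ k ω) A).toReal ∂P := by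
    have hint : Integrable (fun ω => A.indicator (fun _ => (1:ℝ)) (ξ (k+1) ω)) P := by
      apply integrable_of_bdd (C := 1) ((hindm.comp hψ).aestronglyMeasurable)
      refine Filter.Eventually.of_forall fun ω => ?_
      by_cases h : ξ (k+1) ω ∈ A <;> simp [h]
    rw [← setIntegral_condExp hle hint hB]
    exact integral_congr_ae (ae_restrict_of_ae (hMarkov k A hA))
  -- rewrite the right-hand side as two explicit integrals
  have hQre : (fun ω => (QMH (ξ k ω) A).toReal)
      = fun ω => max (1 - |ξ k ω|) 0 * A.indicator (fun _ => (1:ℝ)) (ξ k ω)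
          + |ξ k ω| * (nuMH A).toReal := funext fun ω => QMH_toReal _ hA
  have hint1 : Integrable
      (fun ω => max (1 - |ξ k ω|) 0 * A.indicator (fun _ => (1:ℝ)) (ξ k ω)) (P.restrict B) := by
    apply integrable_of_bdd (C := 1)
    · exact (((measurable_const.sub (hφ.abs)).max measurable_const).mul
        (hindm.comp hφ)).aestronglyMeasurable
    · refine Filter.Eventually.of_forall fun ω => ?_
      rw [abs_mul, abs_of_nonneg (le_max_right _ _)]
      by_cases h : ξ k ω ∈ A
      · simp only [Set.indicator_of_mem h]
        rw [abs_one, mul_one]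
        exact max_le_one _
      · simp [Set.indicator_of_notMem h]
  have hint2 : Integrable (fun ω => |ξ k ω|) (P.restrict B) := by
    apply integrable_of_bdd (C := 1) (hφ.abs.aestronglyMeasurable)
    filter_upwards [haeB] with ω h using by rwa [abs_abs]
  have hrhs : ∫ ω in B, (QMH (ξ k ω) A).toReal ∂P
      = (∫ ω in B, max (1 - |ξ k ω|) 0 * A.indicator (fun _ => (1:ℝ)) (ξ k ω) ∂P)
        + (∫ ω in B, |ξ k ω| ∂P) * (nuMH A).toReal := by
    rw [hQre, integral_add hint1 (hint2.mul_const _), integral_mul_const]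
  -- move to ENNReal
  have lhs_meas : P (ξ (k+1) ⁻¹' A ∩ B)
      = ENNReal.ofReal (∫ ω in B, A.indicator (fun _ => (1:ℝ)) (ξ (k+1) ω) ∂P) := by
    have heq : (fun ω => A.indicator (fun _ => (1:ℝ)) (ξ (k+1) ω))
        = (ξ (k+1) ⁻¹' A).indicator (fun _ => (1:ℝ)) := by
      ext ω; rw [Set.indicator_apply, Set.indicator_apply, Set.mem_preimage]
    rw [heq, integral_indicator (hψ hA), setIntegral_const, smul_eq_mul, mul_one,
      measureReal_def, Measure.restrict_apply (hψ hA), ENNReal.ofReal_toReal (measure_ne_top _ _)]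
  have t1 : ENNReal.ofReal
        (∫ ω in B, max (1 - |ξ k ω|) 0 * A.indicator (fun _ => (1:ℝ)) (ξ k ω) ∂P)
      = ∫⁻ ω in B, A.indicator (fun z => ENNReal.ofReal (1 - |z|)) (ξ k ω) ∂P := by
    rw [ofReal_integral_eq_lintegral_ofReal hint1 (Filter.Eventually.of_forall fun ω => ?_)]
    · exact lintegral_congr fun ω => indicator_ofReal_eq A (ξ k ω)
    · by_cases h : ξ k ω ∈ A
      · simp only [Set.indicator_of_mem h, mul_one]; exact le_max_right _ _
      · simp [Set.indicator_of_notMem h]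
  have t2 : ENNReal.ofReal ((∫ ω in B, |ξ k ω| ∂P) * (nuMH A).toReal)
      = (∫⁻ ω in B, ENNReal.ofReal |ξ k ω| ∂P) * nuMH A := by
    rw [ENNReal.ofReal_mul (integral_nonneg fun ω => abs_nonneg _),
      ofReal_integral_eq_lintegral_ofReal hint2
        (Filter.Eventually.of_forall fun ω => abs_nonneg _),
      ENNReal.ofReal_toReal (nuMH_ne_top A)]
  have hsum : ENNReal.ofReal (∫ ω in B, (QMH (ξ k ω) A).toReal ∂P)
      = ∫⁻ ω in B, A.indicator (fun z => ENNReal.ofReal (1 - |z|)) (ξ k ω) ∂P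
        + (∫⁻ ω in B, ENNReal.ofReal |ξ k ω| ∂P) * nuMH A := by
    rw [hrhs, ENNReal.ofReal_add (integral_nonneg fun ω =>
        mul_nonneg (le_max_right _ _) (Set.indicator_nonneg (fun _ _ => zero_le_one) _))
      (mul_nonneg (integral_nonneg fun ω => abs_nonneg _) ENNReal.toReal_nonneg), t1, t2]
  -- assemble
  rw [Measure.map_apply hψ hA, Measure.restrict_apply (hψ hA), Measure.add_apply,
    Measure.smul_apply, smul_eq_mul, withDensity_apply _ hA, lhs_meas, hreal, hsum]
  congr 1
  rw [← lintegral_indicator hA (fun z => ENNReal.ofReal (1 - |z|)),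
    lintegral_map (f := A.indicator (fun z => ENNReal.ofReal (1 - |z|)))
      (by exact ((measurable_const.sub measurable_abs).ennreal_ofReal).indicator hA) hφ]

lemma step_integral (hmeas : ∀ i, Measurable (ξ i)) (hmarg : ∀ i, P.map (ξ i) = piMH)
    (hMarkov : ∀ (k : ℕ) (A : Set ℝ), MeasurableSet A →
      (P[fun ω => Set.indicator A (fun _ => (1 : ℝ)) (ξ (k + 1) ω) | pastFilt ξ k])
        =ᵐ[P] fun ω => (QMH (ξ k ω) A).toReal)
    (k m : ℕ) {B : Set Ω} (hB : MeasurableSet[pastFilt ξ k] B) :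
    ∫ ω in B, hfun m (ξ (k+1) ω) ∂P = ∫ ω in B, hfun (m+1) (ξ k ω) ∂P := by
  have hmap1 : ∫ ω in B, hfun m (ξ (k+1) ω) ∂P
      = ∫ x, hfun m x ∂((P.restrict B).map (ξ (k+1))) :=
    (integral_map (hmeas (k+1)).aemeasurable (measurable_hfun m).aestronglyMeasurable).symm
  rw [hmap1, kernel_measure P ξ hmeas hmarg hMarkov k hB]
  set m' := (P.restrict B).map (ξ k) with hm'
  haveI : IsFiniteMeasure m' := by
    constructor
    rw [hm', Measure.map_apply (hmeas k) MeasurableSet.univ, Set.preimage_univ]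
    exact lt_of_le_of_lt (Measure.restrict_le_self _) (measure_lt_top P _)
  set c := ∫⁻ ω in B, ENNReal.ofReal |ξ k ω| ∂P with hc
  have hc_ne : c ≠ ⊤ := by
    have hle1 : c ≤ P B := by
      rw [hc, ← setLIntegral_one]
      apply lintegral_mono_ae
      filter_upwards [ae_restrict_of_ae (ae_abs_le P ξ hmeas hmarg k)] with ω h
      calc ENNReal.ofReal |ξ k ω| ≤ ENNReal.ofReal 1 := ENNReal.ofReal_le_ofReal h
        _ = 1 := by simp
    exact (lt_of_le_of_lt hle1 (measure_lt_top P B)).ne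
  haveI hfin1 : IsFiniteMeasure (m'.withDensity fun x => ENNReal.ofReal (1 - |x|)) := by
    constructor
    rw [withDensity_apply _ MeasurableSet.univ, Measure.restrict_univ]
    calc ∫⁻ x, ENNReal.ofReal (1 - |x|) ∂m' ≤ ∫⁻ _, 1 ∂m' := by
          apply lintegral_mono fun x => ?_
          calc ENNReal.ofReal (1 - |x|) ≤ ENNReal.ofReal 1 :=
              ENNReal.ofReal_le_ofReal (by linarith [abs_nonneg x])
            _ = 1 := by simp
      _ < ⊤ := by rw [lintegral_one]; exact measure_lt_top m' _
  haveI hfin2 : IsFiniteMeasure (c • nuMH) := by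
    constructor
    rw [Measure.smul_apply, smul_eq_mul]
    exact ENNReal.mul_lt_top hc_ne.lt_top (measure_lt_top nuMH _)
  have int1 : Integrable (hfun m) (m'.withDensity fun x => ENNReal.ofReal (1 - |x|)) :=
    integrable_of_bdd (measurable_hfun m).aestronglyMeasurable
      (Filter.Eventually.of_forall (abs_hfun_le m))
  have int2 : Integrable (hfun m) (c • nuMH) :=
    integrable_of_bdd (measurable_hfun m).aestronglyMeasurable
      (Filter.Eventually.of_forall (abs_hfun_le m))
  rw [integral_add_measure int1 int2, integral_smul_measure, integral_nuMH_hfun, smul_zero,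
    add_zero, ofReal_comp_eq, integral_withDensity_eq_integral_smul
      (by exact (measurable_const.sub measurable_abs).real_toNNReal :
        Measurable fun x : ℝ => (1 - |x|).toNNReal) (hfun m)]
  have hpt : ∀ x, (1 - |x|).toNNReal • hfun m x = hfun (m+1) x := fun x => by
    rw [NNReal.smul_def, Real.coe_toNNReal', smul_eq_mul, hfun_succ]
  simp_rw [hpt, hm']
  exact integral_map (hmeas k).aemeasurable (measurable_hfun (m+1)).aestronglyMeasurable

lemma sign_split (hmeas : ∀ i, Measurable (ξ i)) (j t : ℕ) {g : ℝ → ℝ}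
    (hg : Measurable g) (hgb : ∀ x, |g x| ≤ 1) :
    ∫ ω, Real.sign (ξ j ω) * g (ξ t ω) ∂P
      = (∫ ω in ξ j ⁻¹' (Set.Ioi 0), g (ξ t ω) ∂P)
        - ∫ ω in ξ j ⁻¹' (Set.Iio 0), g (ξ t ω) ∂P := by
  have hint : Integrable (fun ω => g (ξ t ω)) P :=
    integrable_of_bdd ((hg.comp (hmeas t)).aestronglyMeasurable)
      (Filter.Eventually.of_forall fun ω => hgb _)
  rw [← integral_indicator (hmeas j measurableSet_Ioi),
    ← integral_indicator (hmeas j measurableSet_Iio),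
    ← integral_sub (hint.indicator (hmeas j measurableSet_Ioi))
      (hint.indicator (hmeas j measurableSet_Iio))]
  apply integral_congr_ae
  apply Filter.Eventually.of_forall fun ω => ?_
  show Real.sign (ξ j ω) * g (ξ t ω)
      = (ξ j ⁻¹' Set.Ioi 0).indicator (fun ω => g (ξ t ω)) ω
        - (ξ j ⁻¹' Set.Iio 0).indicator (fun ω => g (ξ t ω)) ω
  rcases lt_trichotomy (ξ j ω) 0 with h | h | h
  · have h1 : ω ∉ ξ j ⁻¹' (Set.Ioi 0) := by simp [Set.mem_preimage, not_lt.mpr h.le]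
    have h2 : ω ∈ ξ j ⁻¹' (Set.Iio 0) := h
    rw [Real.sign_of_neg h, Set.indicator_of_notMem h1, Set.indicator_of_mem h2]
    ring
  · have h1 : ω ∉ ξ j ⁻¹' (Set.Ioi 0) := by simp [Set.mem_preimage, h]
    have h2 : ω ∉ ξ j ⁻¹' (Set.Iio 0) := by simp [Set.mem_preimage, h]
    rw [h, Real.sign_zero, Set.indicator_of_notMem h1, Set.indicator_of_notMem h2]
    ring
  · have h1 : ω ∈ ξ j ⁻¹' (Set.Ioi 0) := h
    have h2 : ω ∉ ξ j ⁻¹' (Set.Iio 0) := by simp [Set.mem_preimage, not_lt.mpr h.le]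
    rw [Real.sign_of_pos h, Set.indicator_of_mem h1, Set.indicator_of_notMem h2]
    ring

lemma sign_step (hmeas : ∀ i, Measurable (ξ i)) (hmarg : ∀ i, P.map (ξ i) = piMH)
    (hMarkov : ∀ (k : ℕ) (A : Set ℝ), MeasurableSet A →
      (P[fun ω => Set.indicator A (fun _ => (1 : ℝ)) (ξ (k + 1) ω) | pastFilt ξ k])
        =ᵐ[P] fun ω => (QMH (ξ k ω) A).toReal)
    {j k : ℕ} (hj : j ≤ k) (m : ℕ) :
    ∫ ω, Real.sign (ξ j ω) * hfun m (ξ (k+1) ω) ∂P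
      = ∫ ω, Real.sign (ξ j ω) * hfun (m+1) (ξ k ω) ∂P := by
  rw [sign_split P ξ hmeas j (k+1) (measurable_hfun m) (abs_hfun_le m),
    sign_split P ξ hmeas j k (measurable_hfun (m+1)) (abs_hfun_le (m+1)),
    step_integral P ξ hmeas hmarg hMarkov k m (memPast ξ hmeas hj measurableSet_Ioi),
    step_integral P ξ hmeas hmarg hMarkov k m (memPast ξ hmeas hj measurableSet_Iio)]

lemma telescope (hmeas : ∀ i, Measurable (ξ i)) (hmarg : ∀ i, P.map (ξ i) = piMH)
    (hMarkov : ∀ (k : ℕ) (A : Set ℝ), MeasurableSet A →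
      (P[fun ω => Set.indicator A (fun _ => (1 : ℝ)) (ξ (k + 1) ω) | pastFilt ξ k])
        =ᵐ[P] fun ω => (QMH (ξ k ω) A).toReal)
    (j : ℕ) : ∀ d m,
    ∫ ω, Real.sign (ξ j ω) * hfun m (ξ (j+d) ω) ∂P
      = ∫ ω, Real.sign (ξ j ω) * hfun (m+d) (ξ j ω) ∂P := by
  intro d
  induction d with
  | zero => intro m; simp
  | succ d ih =>
    intro m
    have h1 : j + (d+1) = (j+d) + 1 := by omega
    rw [h1, sign_step P ξ hmeas hmarg hMarkov (Nat.le_add_right j d) m, ih (m+1),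
      show m + 1 + d = m + (d+1) by omega]

lemma base_integral (hmeas : ∀ i, Measurable (ξ i)) (hmarg : ∀ i, P.map (ξ i) = piMH)
    (j d : ℕ) :
    ∫ ω, Real.sign (ξ j ω) * hfun d (ξ j ω) ∂P = 1 / ((d : ℝ) + 1) := by
  have h : ∫ ω, Real.sign (ξ j ω) * hfun d (ξ j ω) ∂P
      = ∫ x, Real.sign x * hfun d x ∂(P.map (ξ j)) :=
    (integral_map (hmeas j).aemeasurable
      ((measurable_sign.mul (measurable_hfun d)).aestronglyMeasurable)).symm
  rw [h, hmarg j, integral_piMH_sign_hfun]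

lemma covariance (hmeas : ∀ i, Measurable (ξ i)) (hmarg : ∀ i, P.map (ξ i) = piMH)
    (hMarkov : ∀ (k : ℕ) (A : Set ℝ), MeasurableSet A →
      (P[fun ω => Set.indicator A (fun _ => (1 : ℝ)) (ξ (k + 1) ω) | pastFilt ξ k])
        =ᵐ[P] fun ω => (QMH (ξ k ω) A).toReal)
    (i l : ℕ) :
    ∫ ω, Real.sign (ξ i ω) * Real.sign (ξ l ω) ∂P = MH18d.cterm i l := by
  have key : ∀ a b : ℕ, a ≤ b →
      ∫ ω, Real.sign (ξ a ω) * Real.sign (ξ b ω) ∂P = MH18d.cterm a b := by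
    intro a b hab
    have hb : b = a + (b - a) := by omega
    have hre : (fun ω => Real.sign (ξ a ω) * Real.sign (ξ b ω))
        = fun ω => Real.sign (ξ a ω) * hfun 0 (ξ (a + (b - a)) ω) := by
      ext ω; rw [hfun_zero, ← hb]
    rw [hre, telescope P ξ hmeas hmarg hMarkov a (b - a) 0, zero_add,
      base_integral P ξ hmeas hmarg a (b - a), MH18d.cterm_of_le hab]
  rcases le_total i l with h | h
  · exact key i l h
  · have hcomm : (fun ω => Real.sign (ξ i ω) * Real.sign (ξ l ω))
        = fun ω => Real.sign (ξ l ω) * Real.sign (ξ i ω) := by ext ω; ring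
    rw [hcomm, key l i h, MH18d.cterm_symm]

lemma sigma_eq (hmeas : ∀ i, Measurable (ξ i)) (hmarg : ∀ i, P.map (ξ i) = piMH)
    (hMarkov : ∀ (k : ℕ) (A : Set ℝ), MeasurableSet A →
      (P[fun ω => Set.indicator A (fun _ => (1 : ℝ)) (ξ (k + 1) ω) | pastFilt ξ k])
        =ᵐ[P] fun ω => (QMH (ξ k ω) A).toReal)
    (n : ℕ) :
    ∫ ω, (SpartMH ξ n ω) ^ 2 ∂P = 2 * ((n : ℝ) + 1) * MH18d.Hn n - 3 * n := by
  have hint : ∀ i l : ℕ, Integrable (fun ω => Real.sign (ξ i ω) * Real.sign (ξ l ω)) P := by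
    intro i l
    apply integrable_of_bdd (C := 1)
      (((measurable_sign.comp (hmeas i)).mul (measurable_sign.comp (hmeas l))).aestronglyMeasurable)
    apply Filter.Eventually.of_forall fun ω => ?_
    show |Real.sign (ξ i ω) * Real.sign (ξ l ω)| ≤ 1
    rw [abs_mul]
    exact mul_le_one₀ (abs_sign_le _) (abs_nonneg _) (abs_sign_le _)
  have hsq : (fun ω => (SpartMH ξ n ω) ^ 2)
      = fun ω => ∑ i ∈ Finset.Icc 1 n, ∑ l ∈ Finset.Icc 1 n,
          Real.sign (ξ i ω) * Real.sign (ξ l ω) := by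
    ext ω
    rw [SpartMH, sq, Finset.sum_mul_sum]
  rw [hsq, integral_finset_sum _ (fun i _ => integrable_finset_sum _ (fun l _ => hint i l))]
  rw [← MH18d.sum_cterm n]
  apply Finset.sum_congr rfl
  intro i _
  rw [integral_finset_sum _ (fun l _ => hint i l)]
  exact Finset.sum_congr rfl fun l _ => covariance P ξ hmeas hmarg hMarkov i l

end Chain
end MH18e

/-- For the stationary Metropolis–Hastings chain with kernel `Q`, marginal
`π(dx) = dx/2` on `[-1,1]`, and `X_i = sign(ξ_i)`, `S_n = X_1 + ⋯ + X_n`: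
`σ_n²/(2 n log n) → 1` as `n → ∞`, where `σ_n² = 𝔼 S_n²`. -/
theorem statement18
    {Ω : Type*} [MeasurableSpace Ω] (P : Measure Ω) [IsProbabilityMeasure P]
    (ξ : ℕ → Ω → ℝ)
    (hmeas : ∀ i, Measurable (ξ i))
    (hmarg : ∀ i, P.map (ξ i) = piMH)
    (hMarkov : ∀ (k : ℕ) (A : Set ℝ), MeasurableSet A →
      (P[fun ω => Set.indicator A (fun _ => (1 : ℝ)) (ξ (k + 1) ω) | pastFilt ξ k])
        =ᵐ[P] fun ω => (QMH (ξ k ω) A).toReal) :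
    Tendsto (fun n : ℕ =>
        (∫ ω, (SpartMH ξ n ω) ^ 2 ∂P) / (2 * n * Real.log n)) atTop (𝓝 1) := by
  apply MH18d.tendsto_ratio.congr
  intro n
  rw [MH18e.sigma_eq P ξ hmeas hmarg hMarkov n]
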